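/- Annulus estimate for rescaled decaying functions (computational core of the annulus estimate in Lemma 3.4 of the paper): Let α ≥ 1, K > 0, M > 0 and ε ∈ (0,1]. Let F : ℝ³ ∖ {0} → ℝ be measurable with |F(y)| ≤ K |y|^{−2} for all y ≠ 0, and let x_1, …, x_N ∈ ℝ³ be points such that the balls B(x_i, ε) are pairwise disjoint and N ≤ M ε^{−3}. Define h : ℝ³ → ℝ by h(x) = ε^{−α} F((x − x_i)/ε^α) if x ∈ B(x_i, ε/2) ∖ B(x_i, ε/4) for some i, and h(x) = 0 otherwise. Then ‖h‖_{L²(ℝ³)} ≤ √(8π) K M^{1/2} ε^{α − 2}. -/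

import Mathlib

open MeasureTheory Metric Set

noncomputable section

/-- Three-dimensional Euclidean space. -/
abbrev E3 : Type := EuclideanSpace ℝ (Fin 3)

open scoped ENNReal NNReal Real in
lemma vol_unit_ball : (volume (ball (0:E3) 1)).toReal = 4 / 3 * π := by
  rw [EuclideanSpace.volume_ball]
  have hcard : Fintype.card (Fin 3) = 3 := by simp
  rw [hcard]
  have hG : Real.Gamma ((3:ℝ) / 2 + 1) = 3 / 4 * Real.sqrt π := by
    rw [Real.Gamma_add_one (by norm_num)]
    have : (3:ℝ)/2 = 1/2 + 1 := by norm_num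
    rw [this, Real.Gamma_add_one (by norm_num), Real.Gamma_one_half_eq]
    ring
  have hsq : Real.sqrt π ^ 3 = π * Real.sqrt π := by
    have := Real.sq_sqrt (le_of_lt Real.pi_pos)
    nlinarith [Real.sqrt_nonneg π]
  have hne : Real.sqrt π ≠ 0 := by positivity
  push_cast
  rw [hG, hsq]
  simp only [ENNReal.ofReal_one, one_pow, one_mul]
  rw [ENNReal.toReal_ofReal (by positivity)]
  field_simp

open scoped Real in
lemma annulus_integral (a b : ℝ) (ha : 0 < a) (hab : a ≤ b) :
    ∫ y in (ball (0:E3) b \ ball 0 a), (‖y‖^4)⁻¹ = 4 * π * (a⁻¹ - b⁻¹) := by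
  classical
  set f : ℝ → ℝ := (Ico a b).indicator (fun r => (r^4)⁻¹) with hf
  have hset : MeasurableSet (ball (0:E3) b \ ball 0 a) :=
    measurableSet_ball.diff measurableSet_ball
  have hind : ∀ y : E3, (ball (0:E3) b \ ball 0 a).indicator (fun y => (‖y‖^4)⁻¹) y = f ‖y‖ := by
    intro y
    by_cases hy : y ∈ ball (0:E3) b \ ball 0 a
    · have h1 : ‖y‖ ∈ Ico a b := by
        constructor
        · have := hy.2; simp [mem_ball_zero_iff] at this; linarith
        · have := hy.1; simpa [mem_ball_zero_iff] using this
      rw [indicator_of_mem hy, hf, indicator_of_mem h1]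
    · have h1 : ‖y‖ ∉ Ico a b := by
        intro hc
        exact hy ⟨by simp [mem_ball_zero_iff]; exact hc.2, by
          simp [mem_ball_zero_iff]; exact hc.1⟩
      rw [indicator_of_notMem hy, hf, indicator_of_notMem h1]
  have key : ∫ y in (ball (0:E3) b \ ball 0 a), (‖y‖^4)⁻¹ = ∫ y : E3, f ‖y‖ := by
    rw [← integral_indicator hset]
    exact integral_congr_ae (Filter.Eventually.of_forall hind)
  rw [key, integral_fun_norm_addHaar volume f]
  have hdim : Module.finrank ℝ E3 = 3 := by simp [finrank_euclideanSpace]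
  rw [hdim, measureReal_def, vol_unit_ball]
  have hIoi : ∫ y in Ioi (0:ℝ), y ^ (3-1) • f y = ∫ y in Ioi (0:ℝ), (Ico a b).indicator (fun r => (r^2)⁻¹) y := by
    apply setIntegral_congr_fun measurableSet_Ioi
    intro y hy
    by_cases hmem : y ∈ Ico a b
    · simp only [hf, indicator_of_mem hmem, smul_eq_mul]
      have : y ≠ 0 := ne_of_gt (lt_of_lt_of_le ha hmem.1)
      field_simp
    · simp [hf, indicator_of_notMem hmem]
  rw [hIoi, integral_indicator measurableSet_Ico,
    Measure.restrict_restrict measurableSet_Ico]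
  have hinter : Ico a b ∩ Ioi (0:ℝ) = Ico a b := by
    apply inter_eq_left.mpr
    intro y hy; exact lt_of_lt_of_le ha hy.1
  rw [hinter]
  have : ∫ y in Ico a b, (y^2)⁻¹ = ∫ y in a..b, (y:ℝ)^(-2 : ℤ) := by
    rw [intervalIntegral.integral_of_le hab, integral_Ico_eq_integral_Ioo, integral_Ioc_eq_integral_Ioo]
    apply setIntegral_congr_fun measurableSet_Ioo
    intro y hy
    simp [zpow_neg]
  rw [this, integral_zpow (by
    right
    constructor
    · norm_num
    · intro hc
      rw [Set.uIcc_of_le hab] at hc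
      exact absurd hc.1 (by linarith))]
  norm_num
  ring

open scoped ENNReal NNReal in
/-- Annulus estimate for rescaled decaying functions: if `|F(y)| ≤ K |y|^{−2}`,
the balls `B(x_i, ε)` are pairwise disjoint with `N ≤ M ε^{−3}`, and
`h(x) = ε^{−α} F((x − x_i)/ε^α)` on the annuli `B(x_i, ε/2) ∖ B(x_i, ε/4)` and `0`
elsewhere, then `‖h‖_{L²} ≤ √(8π) K M^{1/2} ε^{α−2}`. -/
theorem annulus_estimate_decaying
    (α K M ε : ℝ) (hα : 1 ≤ α) (hK : 0 < K) (hM : 0 < M)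
    (hε : ε ∈ Ioc (0:ℝ) 1)
    (F : E3 → ℝ) (hFmeas : Measurable F)
    (hF : ∀ y : E3, y ≠ 0 → |F y| ≤ K * ‖y‖ ^ (-2 : ℝ))
    (N : ℕ) (x : Fin N → E3)
    (hdisj : Pairwise fun i j => Disjoint (ball (x i) ε) (ball (x j) ε))
    (hN : (N : ℝ) ≤ M * ε ^ (-3 : ℝ))
    (h : E3 → ℝ)
    (hin : ∀ i, ∀ y ∈ ball (x i) (ε/2) \ ball (x i) (ε/4),
      h y = ε ^ (-α) * F ((ε ^ α)⁻¹ • (y - x i)))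
    (hout : ∀ y, (∀ i, y ∉ ball (x i) (ε/2) \ ball (x i) (ε/4)) → h y = 0) :
    eLpNorm h 2 volume
      ≤ ENNReal.ofReal (Real.sqrt (8 * Real.pi) * K * M ^ ((1:ℝ)/2) * ε ^ (α - 2)) := by
  obtain ⟨hε0, hε1⟩ := hε
  set R : ℝ := Real.sqrt (8 * Real.pi) * K * M ^ ((1:ℝ)/2) * ε ^ (α - 2) with hR
  have hR0 : 0 ≤ R := by positivity
  have hεα : (0:ℝ) < ε ^ α := Real.rpow_pos_of_pos hε0 α
  set c : ℝ := K * ε ^ α with hc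
  have hc0 : 0 < c := by positivity
  set S : Set E3 := ball (0:E3) (ε/2) \ ball 0 (ε/4) with hS
  have hSmeas : MeasurableSet S := measurableSet_ball.diff measurableSet_ball
  set g : E3 → ℝ≥0∞ := fun z => S.indicator
      (fun z => ENNReal.ofReal (c^2 * (‖z‖^4)⁻¹)) z with hg
  have hpow2 : ∀ t : ℝ, 0 < t → t ^ (-2:ℝ) = (t^2)⁻¹ := by
    intro t ht
    rw [show (-2:ℝ) = -((2:ℕ):ℝ) by norm_num, Real.rpow_neg ht.le, Real.rpow_natCast]
  -- pointwise bound
  have hpt : ∀ y, (‖h y‖₊ : ℝ≥0∞) ^ (2:ℝ) ≤ ∑ i, g (y - x i) := by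
    intro y
    by_cases hcase : ∃ i, y ∈ ball (x i) (ε/2) \ ball (x i) (ε/4)
    · obtain ⟨i, hi⟩ := hcase
      have hy2 : ‖y - x i‖ < ε/2 := by
        have := hi.1; rwa [mem_ball, dist_eq_norm] at this
      have hy4 : ε/4 ≤ ‖y - x i‖ := by
        have := hi.2; rw [mem_ball, dist_eq_norm] at this; linarith [not_lt.mp this]
      have hn0 : (0:ℝ) < ‖y - x i‖ := by linarith
      have hyne : y - x i ≠ 0 := by
        intro hc'; rw [hc', norm_zero] at hn0; exact lt_irrefl 0 hn0
      have hzne : (ε ^ α)⁻¹ • (y - x i) ≠ 0 :=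
        smul_ne_zero (inv_ne_zero hεα.ne') hyne
      have hznorm : ‖(ε ^ α)⁻¹ • (y - x i)‖ = (ε^α)⁻¹ * ‖y - x i‖ := by
        rw [norm_smul, Real.norm_eq_abs, abs_of_pos (inv_pos.mpr hεα)]
      have hbound : |h y| ≤ c * (‖y - x i‖^2)⁻¹ := by
        rw [hin i y hi, abs_mul]
        have h1 : |ε ^ (-α)| = (ε^α)⁻¹ := by
          rw [abs_of_pos (Real.rpow_pos_of_pos hε0 _), Real.rpow_neg hε0.le]
        have h2 := hF _ hzne
        have h3 : ‖(ε ^ α)⁻¹ • (y - x i)‖ ^ (-2:ℝ) = (ε^α)^2 * (‖y - x i‖^2)⁻¹ := by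
          rw [hznorm, hpow2 _ (by positivity)]
          field_simp
        rw [h1]
        rw [h3] at h2
        calc (ε^α)⁻¹ * |F ((ε ^ α)⁻¹ • (y - x i))|
            ≤ (ε^α)⁻¹ * (K * ((ε^α)^2 * (‖y - x i‖^2)⁻¹)) := by
              apply mul_le_mul_of_nonneg_left h2 (by positivity)
          _ = c * (‖y - x i‖^2)⁻¹ := by rw [hc]; field_simp
      have hmem0 : y - x i ∈ S := by
        refine ⟨mem_ball_zero_iff.mpr hy2, fun hc' => ?_⟩
        exact absurd (mem_ball_zero_iff.mp hc') (not_lt.mpr hy4)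
      have hgval : g (y - x i) = ENNReal.ofReal (c^2 * (‖y - x i‖^4)⁻¹) :=
        indicator_of_mem hmem0 _
      have hle : (‖h y‖₊ : ℝ≥0∞) ^ (2:ℝ) ≤ g (y - x i) := by
        rw [hgval, ← enorm_eq_nnnorm, Real.enorm_eq_ofReal_abs,
          ENNReal.ofReal_rpow_of_nonneg (abs_nonneg _) (by norm_num),
          show ((2:ℝ)) = ((2:ℕ):ℝ) by norm_num, Real.rpow_natCast]
        apply ENNReal.ofReal_le_ofReal
        calc |h y| ^ 2 ≤ (c * (‖y - x i‖^2)⁻¹) ^ 2 := by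
              apply pow_le_pow_left₀ (abs_nonneg _) hbound
          _ = c^2 * (‖y - x i‖^4)⁻¹ := by ring
      exact le_trans hle (Finset.single_le_sum (f := fun j => g (y - x j)) (fun j _ => zero_le) (Finset.mem_univ i))
    · push_neg at hcase
      rw [hout y hcase]
      simp [ENNReal.zero_rpow_of_pos]
  -- measurability of g
  have hgmeas : Measurable g := by
    apply Measurable.indicator _ hSmeas
    exact (measurable_const.mul ((measurable_norm.pow_const 4).inv)).ennreal_ofReal
  -- value of the integral of g
  have hgint : ∫⁻ z, g z ∂volume
      = ENNReal.ofReal (c^2) * ENNReal.ofReal (4 * Real.pi * ((ε/4)⁻¹ - (ε/2)⁻¹)) := by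
    rw [hg]
    rw [lintegral_indicator hSmeas]
    have : ∀ z : E3, ENNReal.ofReal (c^2 * (‖z‖^4)⁻¹)
        = ENNReal.ofReal (c^2) * ENNReal.ofReal ((‖z‖^4)⁻¹) := fun z =>
      ENNReal.ofReal_mul (by positivity)
    simp_rw [this]
    rw [lintegral_const_mul _ (f := fun z : E3 => ENNReal.ofReal ((‖z‖^4)⁻¹)) ((measurable_norm.pow_const 4).inv.ennreal_ofReal)]
    congr 1
    have hintg : IntegrableOn (fun z : E3 => (‖z‖^4)⁻¹) S volume := by
      apply Measure.integrableOn_of_bounded (M := ((ε/4)^4)⁻¹)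
      · filter_upwards [ae_restrict_mem hSmeas] with z hz
        have h4 : ε/4 ≤ ‖z‖ := by
          have := hz.2; rw [mem_ball_zero_iff] at this; linarith [not_lt.mp this]
        rw [Real.norm_eq_abs, abs_of_nonneg (by positivity)]
        apply inv_anti₀ (by positivity)
        apply pow_le_pow_left₀ (by positivity) h4
      · have hle : volume S ≤ volume (ball (0:E3) (ε/2)) := measure_mono diff_subset
        exact (hle.trans_lt measure_ball_lt_top).ne
      · exact ((measurable_norm.pow_const 4).inv).aestronglyMeasurable
    rw [← ofReal_integral_eq_lintegral_ofReal hintg]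
    · rw [annulus_integral (ε/4) (ε/2) (by positivity) (by linarith)]
    · filter_upwards with z; positivity
  -- each translated integral
  have htrans : ∀ i, ∫⁻ y, g (y - x i) ∂volume = ∫⁻ z, g z ∂volume := by
    intro i
    have hmp : MeasurePreserving (fun y : E3 => y - x i) volume volume :=
      measurePreserving_sub_right volume (x i)
    rw [← hmp.map_eq, lintegral_map hgmeas (measurable_sub_const (x i)), hmp.map_eq]
  -- main bound
  have hmain : ∫⁻ y, (‖h y‖₊ : ℝ≥0∞) ^ (2:ℝ) ∂volume ≤ ENNReal.ofReal (R^2) := by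
    calc ∫⁻ y, (‖h y‖₊ : ℝ≥0∞) ^ (2:ℝ) ∂volume
        ≤ ∫⁻ y, ∑ i, g (y - x i) ∂volume := lintegral_mono hpt
      _ = ∑ i : Fin N, ∫⁻ y, g (y - x i) ∂volume := by
          rw [lintegral_finset_sum]
          exact fun i _ => hgmeas.comp (measurable_sub_const (x i))
      _ = N * ∫⁻ z, g z ∂volume := by
          simp_rw [htrans]; rw [Finset.sum_const, Finset.card_univ, Fintype.card_fin,
            nsmul_eq_mul]
      _ ≤ ENNReal.ofReal (M * ε ^ (-3:ℝ)) * ∫⁻ z, g z ∂volume := by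
          apply mul_le_mul_left
          rw [← ENNReal.ofReal_natCast]
          exact ENNReal.ofReal_le_ofReal hN
      _ = ENNReal.ofReal (R^2) := by
          rw [hgint, ← ENNReal.ofReal_mul (by positivity), ← ENNReal.ofReal_mul (by positivity)]
          congr 1
          have e1 : ε ^ (-3:ℝ) = (ε^3)⁻¹ := by
            rw [show (-3:ℝ) = -((3:ℕ):ℝ) by norm_num, Real.rpow_neg hε0.le, Real.rpow_natCast]
          have e2 : ε ^ (α - 2) = ε ^ α / ε ^ 2 := by
            rw [Real.rpow_sub hε0, show ((2:ℝ)) = ((2:ℕ):ℝ) by norm_num, Real.rpow_natCast]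
          have e3 : Real.sqrt (8 * Real.pi) ^ 2 = 8 * Real.pi :=
            Real.sq_sqrt (by positivity)
          have e4 : (M ^ ((1:ℝ)/2)) ^ 2 = M := by
            rw [← Real.sqrt_eq_rpow, Real.sq_sqrt hM.le]
          have e5 : (ε/4)⁻¹ - (ε/2)⁻¹ = 2 / ε := by
            field_simp; ring
          rw [hR, hc, e1, e2, e5,
            show (Real.sqrt (8*Real.pi)*K*M^((1:ℝ)/2)*(ε^α/ε^2))^2
              = (Real.sqrt (8*Real.pi)^2)*(K^2)*((M^((1:ℝ)/2))^2)*((ε^α/ε^2)^2) by ring,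
            e3, e4]
          field_simp
          ring
  -- conclude
  rw [eLpNorm_eq_lintegral_rpow_enorm_toReal (by norm_num) (by norm_num)]
  have ht : (2:ℝ≥0∞).toReal = (2:ℝ) := by norm_num
  rw [ht]
  calc (∫⁻ y, (‖h y‖₊ : ℝ≥0∞) ^ (2:ℝ) ∂volume) ^ ((1:ℝ)/2)
      ≤ (ENNReal.ofReal (R^2)) ^ ((1:ℝ)/2) :=
        ENNReal.rpow_le_rpow hmain (by norm_num)
    _ = ENNReal.ofReal R := by
        rw [ENNReal.ofReal_rpow_of_nonneg (by positivity) (by norm_num),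
          ← Real.rpow_natCast R 2, ← Real.rpow_mul hR0]
        norm_num
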